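/- arXiv:1805.01575 — 5 statements merged into one kernel-verified Lean document; each statement's English description precedes it below -/
import Mathlib

section
/- Let k, n ≥ 1 be integers and x00, x10, x01, x11 nonnegative integers summing to n, all strictly positive, and suppose ((x00+x10)/n)^{1/k} + ((x00+x01)/n)^{1/k} − (x00/n)^{1/k} < 1. Define p̂00 = (x00/n)^{1/k}, p̂10 = ((x00+x10)/n)^{1/k} − p̂00, p̂01 = ((x00+x01)/n)^{1/k} − p̂00, p̂11 = 1 − p̂00 − p̂10 − p̂01. Then (p̂10, p̂01, p̂11) has all entries strictly positive with sum strictly less than 1, and the corresponding θ̂ satisfies θ̂00 = x00/n, θ̂10 = x10/n, θ̂01 = x01/n, θ̂11 = x11/n. -/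
lemma rpow_inv_pow {a : ℝ} (ha : 0 ≤ a) {k : ℕ} (hk : 1 ≤ k) :
    (a ^ ((1 : ℝ) / k)) ^ k = a := by
  have hk0 : (k : ℝ) ≠ 0 := Nat.cast_ne_zero.mpr (by omega)
  rw [← Real.rpow_natCast (a ^ ((1 : ℝ) / k)) k, ← Real.rpow_mul ha,
    one_div, inv_mul_cancel₀ hk0, Real.rpow_one]

/-- the closed-form MLE lies in the parameter space and maps to the
empirical frequencies under the condition defining R_n. -/
theorem stmt_5 (k n : ℕ) (hk : 1 ≤ k) (hn : 1 ≤ n)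
    (x00 x10 x01 x11 : ℕ) (hsum : x00 + x10 + x01 + x11 = n)
    (h00 : 0 < x00) (h10 : 0 < x10) (h01 : 0 < x01) (h11 : 0 < x11)
    (hR : (((x00 : ℝ) + x10) / n) ^ ((1 : ℝ) / k) + (((x00 : ℝ) + x01) / n) ^ ((1 : ℝ) / k)
        - ((x00 : ℝ) / n) ^ ((1 : ℝ) / k) < 1) :
    let p00 : ℝ := ((x00 : ℝ) / n) ^ ((1 : ℝ) / k)
    let p10 : ℝ := (((x00 : ℝ) + x10) / n) ^ ((1 : ℝ) / k) - p00
    let p01 : ℝ := (((x00 : ℝ) + x01) / n) ^ ((1 : ℝ) / k) - p00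
    let p11 : ℝ := 1 - p00 - p10 - p01
    (0 < p10 ∧ 0 < p01 ∧ 0 < p11 ∧ p10 + p01 + p11 < 1) ∧
    p00 ^ k = (x00 : ℝ) / n ∧
    (p00 + p10) ^ k - p00 ^ k = (x10 : ℝ) / n ∧
    (p00 + p01) ^ k - p00 ^ k = (x01 : ℝ) / n ∧
    1 - (p00 + p10) ^ k - (p00 + p01) ^ k + p00 ^ k = (x11 : ℝ) / n := by
  intro p00 p10 p01 p11
  have hnpos : (0 : ℝ) < n := by exact_mod_cast hn
  have hkpos : (0 : ℝ) < (1 : ℝ) / k := by positivity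
  have ha00 : (0 : ℝ) ≤ (x00 : ℝ) / n := by positivity
  have ha10 : (0 : ℝ) ≤ ((x00 : ℝ) + x10) / n := by positivity
  have ha01 : (0 : ℝ) ≤ ((x00 : ℝ) + x01) / n := by positivity
  have e00 : p00 ^ k = (x00 : ℝ) / n := rpow_inv_pow ha00 hk
  have e10 : (p00 + p10) ^ k = ((x00 : ℝ) + x10) / n := by
    show ((p00 + ((((x00 : ℝ) + x10) / n) ^ ((1 : ℝ) / k) - p00))) ^ k = _
    rw [add_sub_cancel]
    exact rpow_inv_pow ha10 hk
  have e01 : (p00 + p01) ^ k = ((x00 : ℝ) + x01) / n := by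
    show ((p00 + ((((x00 : ℝ) + x01) / n) ^ ((1 : ℝ) / k) - p00))) ^ k = _
    rw [add_sub_cancel]
    exact rpow_inv_pow ha01 hk
  have hp00pos : 0 < p00 := Real.rpow_pos_of_pos (by positivity) _
  have hp10 : 0 < p10 := by
    have : ((x00 : ℝ) / n) ^ ((1:ℝ)/k) < (((x00 : ℝ) + x10) / n) ^ ((1:ℝ)/k) := by
      apply Real.rpow_lt_rpow ha00 _ hkpos
      apply (div_lt_div_iff_of_pos_right hnpos).mpr
      have : (0:ℝ) < x10 := by exact_mod_cast h10
      linarith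
    exact sub_pos.mpr this
  have hp01 : 0 < p01 := by
    have : ((x00 : ℝ) / n) ^ ((1:ℝ)/k) < (((x00 : ℝ) + x01) / n) ^ ((1:ℝ)/k) := by
      apply Real.rpow_lt_rpow ha00 _ hkpos
      apply (div_lt_div_iff_of_pos_right hnpos).mpr
      have : (0:ℝ) < x01 := by exact_mod_cast h01
      linarith
    exact sub_pos.mpr this
  have hp11 : 0 < p11 := by
    simp only [p11, p10, p01, sub_pos]
    linarith
  have hsumlt : p10 + p01 + p11 < 1 := by
    have : p10 + p01 + p11 = 1 - p00 := by ring
    rw [this]; linarith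
  have hsumR : ((x00 : ℝ) + x10 + x01 + x11) = n := by exact_mod_cast hsum
  refine ⟨⟨hp10, hp01, hp11, hsumlt⟩, e00, ?_, ?_, ?_⟩
  · rw [e10, e00]; field_simp; ring
  · rw [e01, e00]; field_simp; ring
  · rw [e10, e01, e00]
    field_simp
    linarith
end

section
/- Fix k ≥ 1 and suppose x11 = 0 and x00, x10, x01 are nonnegative reals. For any probability vector p = (p00, p10, p01, p11) with p11 > 0, there exists a probability vector p′ with p′11 = 0 such that ℓ(p′) ≥ ℓ(p), where ℓ(p) = x00·log(p00^k) + x10·log((p00+p10)^k − p00^k) + x01·log((p00+p01)^k − p00^k) (terms with zero count omitted; log of a nonpositive number treated as −∞). Specifically: if x10 > 0 take p′ = (p00, p10+p11, p01, 0); else if x01 > 0 take p′ = (p00, p10, p01+p11, 0); else take p′ = (p00+p11, p10, p01, 0). -/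
open scoped Classical

/-- A single term of the group-testing log-likelihood: terms with zero count are omitted,
and log of a nonpositive number is −∞. -/
noncomputable def glTerm (x a : ℝ) : EReal :=
  if x = 0 then 0 else if 0 < a then ((x * Real.log a : ℝ) : EReal) else ⊥

/-- Two-trait group testing log-likelihood with x11 = 0. -/
noncomputable def gtLL (k : ℕ) (x00 x10 x01 p00 p10 p01 : ℝ) : EReal :=
  glTerm x00 (p00 ^ k) + glTerm x10 ((p00 + p10) ^ k - p00 ^ k) +
    glTerm x01 ((p00 + p01) ^ k - p00 ^ k)

lemma glTerm_mono {x a b : ℝ} (hx : 0 ≤ x) (hab : a ≤ b) :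
    glTerm x a ≤ glTerm x b := by
  unfold glTerm
  by_cases hx0 : x = 0
  · simp [hx0]
  · simp only [hx0, if_false]
    by_cases ha : 0 < a
    · have hb : 0 < b := lt_of_lt_of_le ha hab
      simp only [ha, hb, if_true]
      exact_mod_cast mul_le_mul_of_nonneg_left (Real.log_le_log ha hab) hx
    · simp only [ha, if_false]
      exact bot_le

lemma glTerm_zero (a : ℝ) : glTerm 0 a = 0 := by simp [glTerm]

/-- when x11 = 0, moving the mass p11 into another coordinate as prescribed
never decreases the likelihood, producing a probability vector with p′11 = 0. -/
theorem stmt_8 (k : ℕ) (hk : 1 ≤ k) (x00 x10 x01 : ℝ)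
    (h00 : 0 ≤ x00) (h10 : 0 ≤ x10) (h01 : 0 ≤ x01)
    (p00 p10 p01 p11 : ℝ)
    (hp00 : 0 ≤ p00) (hp10 : 0 ≤ p10) (hp01 : 0 ≤ p01) (hp11 : 0 < p11)
    (hpsum : p00 + p10 + p01 + p11 = 1) :
    ∃ q00 q10 q01 : ℝ,
      ((0 < x10 ∧ (q00, q10, q01) = (p00, p10 + p11, p01)) ∨
       (x10 = 0 ∧ 0 < x01 ∧ (q00, q10, q01) = (p00, p10, p01 + p11)) ∨
       (x10 = 0 ∧ x01 = 0 ∧ (q00, q10, q01) = (p00 + p11, p10, p01))) ∧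
      0 ≤ q00 ∧ 0 ≤ q10 ∧ 0 ≤ q01 ∧ q00 + q10 + q01 + 0 = 1 ∧
      gtLL k x00 x10 x01 p00 p10 p01 ≤ gtLL k x00 x10 x01 q00 q10 q01 := by
  rcases h10.lt_or_eq with h10p | h10z
  · refine ⟨p00, p10 + p11, p01, Or.inl ⟨h10p, rfl⟩, hp00, by linarith, hp01, by linarith, ?_⟩
    unfold gtLL
    refine add_le_add (add_le_add le_rfl (glTerm_mono h10 ?_)) le_rfl
    exact sub_le_sub_right (pow_le_pow_left₀ (by linarith) (by linarith) k) _
  · rcases h01.lt_or_eq with h01p | h01z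
    · refine ⟨p00, p10, p01 + p11, Or.inr (Or.inl ⟨h10z.symm, h01p, rfl⟩), hp00, hp10,
        by linarith, by linarith, ?_⟩
      unfold gtLL
      refine add_le_add le_rfl (glTerm_mono h01 ?_)
      exact sub_le_sub_right (pow_le_pow_left₀ (by linarith) (by linarith) k) _
    · refine ⟨p00 + p11, p10, p01, Or.inr (Or.inr ⟨h10z.symm, h01z.symm, rfl⟩),
        by linarith, hp10, hp01, by linarith, ?_⟩
      unfold gtLL
      rw [← h10z, ← h01z]
      simp only [glTerm_zero, add_zero]
      exact glTerm_mono h00 (pow_le_pow_left₀ hp00 (by linarith) k)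
end

section
/- Fix integer k ≥ 1 and strictly positive reals x00, x10, x01, x11. The reduced two-parameter log-likelihood ℓ*(p10, p01) = x00·log((1 − p10 − p01)^k) + x10·log((1 − p01)^k − (1 − p10 − p01)^k) + x01·log((1 − p10)^k − (1 − p10 − p01)^k) + x11·log(1 − (1 − p01)^k − (1 − p10)^k + (1 − p10 − p01)^k) is strictly concave on {(p10, p01) : p10, p01 > 0, p10 + p01 < 1, and all four log arguments positive}. -/
set_option maxHeartbeats 1000000

open Finset


lemma lemP (m : ℕ) (α β γ : ℝ) (h0γ : 0 ≤ γ) (hγαβ : γ ≤ α * β) (h0α : 0 ≤ α)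
    (hβ1 : β ≤ 1) (hrel : α - γ = 1 - β) :
    α ^ (m+1) - γ ^ (m+1) ≤ α ^ m * (1 - β ^ (m+1)) := by
  have h1 : (∑ i ∈ range (m+1), α ^ i * γ ^ (m - i)) * (α - γ) = α ^ (m+1) - γ ^ (m+1) := by
    have := geom_sum₂_mul α γ (m+1)
    simpa using this
  have h2 : (∑ i ∈ range (m+1), β ^ i) * (1 - β) = 1 - β ^ (m+1) := by
    have := geom_sum_mul β (m+1)
    nlinarith [this]
  have hsum : (∑ i ∈ range (m+1), α ^ i * γ ^ (m - i)) ≤ α ^ m * ∑ i ∈ range (m+1), β ^ i := by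
    rw [mul_sum]
    rw [← Finset.sum_range_reflect (fun i => α ^ m * β ^ i) (m+1)]
    apply Finset.sum_le_sum
    intro i hi
    have him : i ≤ m := by simpa [Nat.lt_succ_iff] using hi
    have h3 : γ ^ (m - i) ≤ (α * β) ^ (m - i) := pow_le_pow_left₀ h0γ hγαβ _
    have h4 : α ^ i * (α * β) ^ (m - i) = α ^ m * β ^ (m + 1 - 1 - i) := by
      rw [mul_pow, ← mul_assoc, ← pow_add]
      congr 2 <;> omega
    calc α ^ i * γ ^ (m - i) ≤ α ^ i * (α * β) ^ (m - i) := by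
          apply mul_le_mul_of_nonneg_left h3 (pow_nonneg h0α i)
      _ = α ^ m * β ^ (m + 1 - 1 - i) := h4
  have hb : 0 ≤ 1 - β := by linarith
  calc α ^ (m+1) - γ ^ (m+1) = (∑ i ∈ range (m+1), α ^ i * γ ^ (m - i)) * (1 - β) := by
        rw [← hrel, h1]
    _ ≤ (α ^ m * ∑ i ∈ range (m+1), β ^ i) * (1 - β) := by
        apply mul_le_mul_of_nonneg_right hsum hb
    _ = α ^ m * (1 - β ^ (m+1)) := by rw [mul_assoc, h2]

lemma lemC2 (m : ℕ) (α β γ : ℝ) (h0γ : 0 ≤ γ) (hγ1 : γ ≤ 1) (hγαβ : γ ≤ α * β)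
    (h0α : 0 ≤ α) (h0β : 0 ≤ β) :
    γ ^ m * ((∑ i ∈ range (m+1), α ^ i) * (∑ i ∈ range (m+1), β ^ i)) ≤
      2 * ((∑ i ∈ range (m+1), α ^ i * γ ^ (m - i)) *
           (∑ i ∈ range (m+1), β ^ i * γ ^ (m - i))) := by
  set s : Finset (ℕ × ℕ) := range (m+1) ×ˢ range (m+1) with hs
  set T : ℕ × ℕ → ℝ := fun p => (α ^ p.1 * γ ^ (m - p.1)) * (β ^ p.2 * γ ^ (m - p.2)) with hT
  set S : ℕ × ℕ → ℝ := fun p => γ ^ m * (α ^ p.1 * β ^ p.2) with hS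
  have hTnn : ∀ p, 0 ≤ T p := by
    intro p; simp only [hT]; positivity
  have hRHS : (∑ i ∈ range (m+1), α ^ i * γ ^ (m - i)) *
      (∑ i ∈ range (m+1), β ^ i * γ ^ (m - i)) = ∑ p ∈ s, T p := by
    rw [Finset.sum_mul_sum, hs, Finset.sum_product]
  have hLHS : γ ^ m * ((∑ i ∈ range (m+1), α ^ i) * (∑ i ∈ range (m+1), β ^ i)) =
      ∑ p ∈ s, S p := by
    rw [Finset.sum_mul_sum, hs, Finset.sum_product, Finset.mul_sum]
    congr 1; ext i; rw [Finset.mul_sum]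
  set s1 := s.filter (fun p => m ≤ p.1 + p.2) with hs1
  set s2 := s.filter (fun p => ¬ m ≤ p.1 + p.2) with hs2
  have hsplit : ∑ p ∈ s, S p = ∑ p ∈ s1, S p + ∑ p ∈ s2, S p :=
    (Finset.sum_filter_add_sum_filter_not s _ S).symm
  -- part 1
  have h1 : ∑ p ∈ s1, S p ≤ ∑ p ∈ s, T p := by
    refine le_trans (Finset.sum_le_sum ?_) (Finset.sum_le_sum_of_subset_of_nonneg
      (Finset.filter_subset _ _) (fun p _ _ => hTnn p))
    intro p hp
    rw [hs1, Finset.mem_filter] at hp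
    obtain ⟨hps, hpm⟩ := hp
    rw [hs, Finset.mem_product, Finset.mem_range, Finset.mem_range] at hps
    have hγ : γ ^ m ≤ γ ^ (m - p.1) * γ ^ (m - p.2) := by
      rw [← pow_add]
      exact pow_le_pow_of_le_one h0γ hγ1 (by omega)
    calc S p = (α ^ p.1 * β ^ p.2) * γ ^ m := by rw [hS]; ring
      _ ≤ (α ^ p.1 * β ^ p.2) * (γ ^ (m - p.1) * γ ^ (m - p.2)) := by
          apply mul_le_mul_of_nonneg_left hγ (by positivity)
      _ = T p := by rw [hT]; ring
  -- part 2
  have h2 : ∑ p ∈ s2, S p ≤ ∑ p ∈ s, T p := by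
    have hinj : ∀ p ∈ s2, ∀ q ∈ s2, (m - p.2, m - p.1) = (m - q.2, m - q.1) → p = q := by
      intro p hp q hq he
      rw [hs2, Finset.mem_filter, hs, Finset.mem_product, Finset.mem_range, Finset.mem_range] at hp hq
      have h1' := congrArg Prod.fst he
      have h2' := congrArg Prod.snd he
      simp only at h1' h2'
      have : p.1 = q.1 := by omega
      have : p.2 = q.2 := by omega
      exact Prod.ext (by omega) (by omega)
    have himg : ∑ p ∈ s2, T (m - p.2, m - p.1) = ∑ q ∈ s2.image (fun p => (m - p.2, m - p.1)), T q :=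
      (Finset.sum_image hinj).symm
    have hsub : s2.image (fun p => (m - p.2, m - p.1)) ⊆ s := by
      intro q hq
      rw [Finset.mem_image] at hq
      obtain ⟨p, hp, rfl⟩ := hq
      rw [hs, Finset.mem_product, Finset.mem_range, Finset.mem_range]
      omega
    have hstep : ∑ p ∈ s2, S p ≤ ∑ p ∈ s2, T (m - p.2, m - p.1) := by
      apply Finset.sum_le_sum
      intro p hp
      rw [hs2, Finset.mem_filter, hs, Finset.mem_product, Finset.mem_range, Finset.mem_range] at hp
      obtain ⟨⟨hp1, hp2⟩, hpm⟩ := hp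
      have he1 : m - (m - p.2) = p.2 := by omega
      have he2 : m - (m - p.1) = p.1 := by omega
      have hm1 : m - p.2 = p.1 + (m - p.1 - p.2) := by omega
      have hm2 : m - p.1 = p.2 + (m - p.1 - p.2) := by omega
      set e := m - p.1 - p.2 with hee
      have hγm : γ ^ m = γ ^ p.1 * γ ^ p.2 * γ ^ e := by
        rw [← pow_add, ← pow_add]; congr 1; omega
      have hγe : γ ^ e ≤ α ^ e * β ^ e := by
        rw [← mul_pow]; exact pow_le_pow_left₀ h0γ hγαβ e
      calc S p = (α ^ p.1 * β ^ p.2 * (γ ^ p.1 * γ ^ p.2)) * γ ^ e := by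
            rw [hS, hγm]; ring
        _ ≤ (α ^ p.1 * β ^ p.2 * (γ ^ p.1 * γ ^ p.2)) * (α ^ e * β ^ e) := by
            apply mul_le_mul_of_nonneg_left hγe (by positivity)
        _ = T (m - p.2, m - p.1) := by
            rw [hT]; simp only
            rw [hm1, hm2, pow_add α, pow_add β]
            have h3 : m - (p.1 + e) = p.2 := by omega
            have h4 : m - (p.2 + e) = p.1 := by omega
            rw [h3, h4]; ring
    calc ∑ p ∈ s2, S p ≤ ∑ p ∈ s2, T (m - p.2, m - p.1) := hstep
      _ = ∑ q ∈ s2.image (fun p => (m - p.2, m - p.1)), T q := himg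
      _ ≤ ∑ p ∈ s, T p := Finset.sum_le_sum_of_subset_of_nonneg hsub (fun p _ _ => hTnn p)
  rw [hLHS, hRHS, hsplit]
  linarith [h1, h2]

lemma lemC1 (m : ℕ) (a b : ℝ) (ha : 0 < a) (hb : 0 < b) (hab : a + b < 1) :
    ((m:ℝ)+1) * (1 - (1-a)^(m+2) - (1-b)^(m+2) + (1-a-b)^(m+2)) ≤
    ((m:ℝ)+2) * ((1 - (1-a)^(m+1)) * (1 - (1-b)^(m+1))) := by
  set w : ℝ → ℝ := fun t => ((m:ℝ)+2) * ((1 - (1-t)^(m+1)) * (1 - (1-b)^(m+1))) -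
      ((m:ℝ)+1) * (1 - (1-t)^(m+2) - (1-b)^(m+2) + (1-t-b)^(m+2)) with hw
  set W : ℝ → ℝ := fun t => ((m:ℝ)+2) * ((m:ℝ)+1) *
      ((1-t)^m * (1 - (1-b)^(m+1)) - ((1-t)^(m+1) - (1-t-b)^(m+1))) with hW
  have hderiv : ∀ t : ℝ, HasDerivAt w (W t) t := by
    intro t
    have h1 : HasDerivAt (fun t : ℝ => 1 - t) (-1) t := (hasDerivAt_id t).const_sub 1
    have h2 : HasDerivAt (fun t : ℝ => 1 - t - b) (-1) t := h1.sub_const b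
    have h3 : HasDerivAt (fun t : ℝ => (1-t)^(m+1)) (-((m:ℝ)+1) * (1-t)^m) t := by
      have := h1.pow (m+1)
      refine (this).congr_deriv ?_
      push_cast
      ring
    have h4 : HasDerivAt (fun t : ℝ => (1-t)^(m+2)) (-((m:ℝ)+2) * (1-t)^(m+1)) t := by
      have := h1.pow (m+2)
      refine (this).congr_deriv ?_
      push_cast
      ring
    have h5 : HasDerivAt (fun t : ℝ => (1-t-b)^(m+2)) (-((m:ℝ)+2) * (1-t-b)^(m+1)) t := by
      have := h2.pow (m+2)
      refine (this).congr_deriv ?_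
      push_cast
      ring
    have h6 : HasDerivAt (fun t : ℝ => ((m:ℝ)+2) * ((1 - (1-t)^(m+1)) * (1 - (1-b)^(m+1))))
        (((m:ℝ)+2) * ((((m:ℝ)+1) * (1-t)^m) * (1 - (1-b)^(m+1)))) t := by
      have := ((h3.const_sub 1).mul_const (1 - (1-b)^(m+1))).const_mul ((m:ℝ)+2)
      refine (this).congr_deriv ?_
      ring
    have h7 : HasDerivAt (fun t : ℝ => ((m:ℝ)+1) * (1 - (1-t)^(m+2) - (1-b)^(m+2) + (1-t-b)^(m+2)))
        (((m:ℝ)+1) * (((m:ℝ)+2) * (1-t)^(m+1) - ((m:ℝ)+2) * (1-t-b)^(m+1))) t := by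
      have := (((h4.const_sub 1).sub_const ((1-b)^(m+2))).add h5).const_mul ((m:ℝ)+1)
      refine (this).congr_deriv ?_
      ring
    have := h6.sub h7
    refine (this).congr_deriv ?_
    rw [hW]
    ring
  have hW0 : ∀ t ∈ Set.Icc (0:ℝ) a, 0 ≤ W t := by
    intro t ht
    obtain ⟨ht0, hta⟩ := ht
    have key := lemP m (1-t) (1-b) (1-t-b)
      (by nlinarith) (by nlinarith) (by nlinarith) (by nlinarith) (by ring)
    show 0 ≤ ((m:ℝ)+2) * ((m:ℝ)+1) *
      ((1-t)^m * (1 - (1-b)^(m+1)) - ((1-t)^(m+1) - (1-t-b)^(m+1)))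
    have hC : (0:ℝ) ≤ ((m:ℝ)+2) * ((m:ℝ)+1) := by positivity
    nlinarith [key, hC]
  have hmono : MonotoneOn w (Set.Icc (0:ℝ) a) := by
    apply monotoneOn_of_deriv_nonneg (convex_Icc 0 a)
    · exact fun t _ => ((hderiv t).continuousAt).continuousWithinAt
    · intro t ht
      exact ((hderiv t).differentiableAt).differentiableWithinAt
    · intro t ht
      rw [interior_Icc] at ht
      rw [(hderiv t).deriv]
      exact hW0 t ⟨ht.1.le, ht.2.le⟩
  have h0 : w 0 = 0 := by
    rw [hw]
    norm_num
  have ha' : w 0 ≤ w a := hmono (Set.left_mem_Icc.2 ha.le) (Set.right_mem_Icc.2 ha.le) ha.le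
  rw [h0] at ha'
  have ha2 : 0 ≤ ((m:ℝ)+2) * ((1 - (1-a)^(m+1)) * (1 - (1-b)^(m+1))) -
      ((m:ℝ)+1) * (1 - (1-a)^(m+2) - (1-b)^(m+2) + (1-a-b)^(m+2)) := ha'
  linarith

lemma lemFpos (m : ℕ) (a b : ℝ) (ha : 0 < a) (hb : 0 < b) (hab : a + b < 1) :
    0 < 1 - (1-b)^(m+2) - (1-a)^(m+2) + (1-a-b)^(m+2) := by
  have h1 : ((1:ℝ)-b)^(m+2) - (1-a-b)^(m+2) =
      (∑ i ∈ range (m+2), (1-b)^i * (1-a-b)^(m+1-i)) * a := by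
    have := geom_sum₂_mul (1-b) (1-a-b) (m+2)
    have he : (1:ℝ)-b - (1-a-b) = a := by ring
    rw [he] at this
    exact this.symm
  have h2 : (1:ℝ) - (1-a)^(m+2) = (∑ i ∈ range (m+2), (1-a)^i) * a := by
    have := geom_sum_mul (1-a) (m+2)
    nlinarith [this]
  have hsum : (∑ i ∈ range (m+2), (1-b)^i * (1-a-b)^(m+1-i)) <
      ∑ i ∈ range (m+2), (1-a)^i := by
    rw [← Finset.sum_range_reflect (fun i => (1-a)^i) (m+2)]
    apply Finset.sum_lt_sum
    · intro i hi
      have h3 : ((1:ℝ)-b)^i ≤ 1 := pow_le_one₀ (by linarith) (by linarith)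
      have h4 : ((1:ℝ)-a-b)^(m+1-i) ≤ (1-a)^(m+1-i) := by
        apply pow_le_pow_left₀ (by linarith) (by linarith)
      have h5 : m + 2 - 1 - i = m + 1 - i := by omega
      rw [h5]
      have h6 : (0:ℝ) ≤ (1-a-b)^(m+1-i) := pow_nonneg (by linarith) _
      nlinarith [h3, h4, h6, pow_nonneg (show (0:ℝ) ≤ 1-a by linarith) (m+1-i)]
    · refine ⟨0, Finset.mem_range.2 (by omega), ?_⟩
      have h5 : m + 2 - 1 - 0 = m + 1 := by omega
      rw [h5]
      simp only [pow_zero, one_mul, Nat.sub_zero]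
      apply pow_lt_pow_left₀ (by linarith) (by linarith)
      omega
  nlinarith [h1, h2, mul_lt_mul_of_pos_right hsum ha]

lemma lemMain (m : ℕ) (a b : ℝ) (ha : 0 < a) (hb : 0 < b) (hab : a + b < 1) :
    ((m:ℝ)+1) * (1-a-b)^m * (1 - (1-a)^(m+2) - (1-b)^(m+2) + (1-a-b)^(m+2)) ≤
    2 * ((m:ℝ)+2) * (((1-a)^(m+1) - (1-a-b)^(m+1)) * ((1-b)^(m+1) - (1-a-b)^(m+1))) := by
  have hγ0 : (0:ℝ) ≤ 1-a-b := by linarith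
  have hγ1 : (1:ℝ)-a-b ≤ 1 := by linarith
  have hα0 : (0:ℝ) ≤ 1-a := by linarith
  have hβ0 : (0:ℝ) ≤ 1-b := by linarith
  have hγαβ : (1:ℝ)-a-b ≤ (1-a)*(1-b) := by nlinarith
  have hc1 := lemC1 m a b ha hb hab
  have hc2 := lemC2 m (1-a) (1-b) (1-a-b) hγ0 hγ1 hγαβ hα0 hβ0
  -- geometric identities
  have hgα : (1:ℝ) - (1-a)^(m+1) = (∑ i ∈ range (m+1), (1-a)^i) * a := by
    have := geom_sum_mul (1-a) (m+1); nlinarith [this]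
  have hgβ : (1:ℝ) - (1-b)^(m+1) = (∑ i ∈ range (m+1), (1-b)^i) * b := by
    have := geom_sum_mul (1-b) (m+1); nlinarith [this]
  have hgP : ((1:ℝ)-a)^(m+1) - (1-a-b)^(m+1) =
      (∑ i ∈ range (m+1), (1-a)^i * (1-a-b)^(m-i)) * b := by
    have := geom_sum₂_mul (1-a) (1-a-b) (m+1)
    have he : (1:ℝ)-a - (1-a-b) = b := by ring
    rw [he] at this
    exact this.symm
  have hgQ : ((1:ℝ)-b)^(m+1) - (1-a-b)^(m+1) =
      (∑ i ∈ range (m+1), (1-b)^i * (1-a-b)^(m-i)) * a := by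
    have := geom_sum₂_mul (1-b) (1-a-b) (m+1)
    have he : (1:ℝ)-b - (1-a-b) = a := by ring
    rw [he] at this
    exact this.symm
  have hab0 : 0 ≤ a * b := by positivity
  have step2 : (1-a-b)^m * ((1 - (1-a)^(m+1)) * (1 - (1-b)^(m+1))) ≤
      2 * (((1-a)^(m+1) - (1-a-b)^(m+1)) * ((1-b)^(m+1) - (1-a-b)^(m+1))) := by
    rw [hgα, hgβ, hgP, hgQ]
    calc (1-a-b)^m * ((∑ i ∈ range (m+1), (1-a)^i) * a * ((∑ i ∈ range (m+1), (1-b)^i) * b))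
        = ((1-a-b)^m * ((∑ i ∈ range (m+1), (1-a)^i) * (∑ i ∈ range (m+1), (1-b)^i))) * (a*b) := by
          ring
      _ ≤ (2 * ((∑ i ∈ range (m+1), (1-a)^i * (1-a-b)^(m-i)) *
           (∑ i ∈ range (m+1), (1-b)^i * (1-a-b)^(m-i)))) * (a*b) := by
          exact mul_le_mul_of_nonneg_right hc2 hab0
      _ = 2 * ((∑ i ∈ range (m+1), (1-a)^i * (1-a-b)^(m-i)) * b *
           ((∑ i ∈ range (m+1), (1-b)^i * (1-a-b)^(m-i)) * a)) := by ring
  have hγm : (0:ℝ) ≤ (1-a-b)^m := by positivity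
  calc ((m:ℝ)+1) * (1-a-b)^m * (1 - (1-a)^(m+2) - (1-b)^(m+2) + (1-a-b)^(m+2))
      = (1-a-b)^m * (((m:ℝ)+1) * (1 - (1-a)^(m+2) - (1-b)^(m+2) + (1-a-b)^(m+2))) := by ring
    _ ≤ (1-a-b)^m * (((m:ℝ)+2) * ((1 - (1-a)^(m+1)) * (1 - (1-b)^(m+1)))) := by
        exact mul_le_mul_of_nonneg_left hc1 hγm
    _ = ((m:ℝ)+2) * ((1-a-b)^m * ((1 - (1-a)^(m+1)) * (1 - (1-b)^(m+1)))) := by ring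
    _ ≤ ((m:ℝ)+2) * (2 * (((1-a)^(m+1) - (1-a-b)^(m+1)) * ((1-b)^(m+1) - (1-a-b)^(m+1)))) := by
        apply mul_le_mul_of_nonneg_left step2 (by positivity)
    _ = 2 * ((m:ℝ)+2) * (((1-a)^(m+1) - (1-a-b)^(m+1)) * ((1-b)^(m+1) - (1-a-b)^(m+1))) := by
        ring

lemma lemN1 (m : ℕ) (u v du dv : ℝ) (hv : 0 < v) (huv : v < u) (hd : ¬(du = 0 ∧ dv = 0)) :
    ((m:ℝ)+2) * ((m:ℝ)+1) * (u^m * du^2 - v^m * dv^2) * (u^(m+2) - v^(m+2)) <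
    (((m:ℝ)+2) * (u^(m+1) * du - v^(m+1) * dv))^2 := by
  have hu : 0 < u := lt_trans hv huv
  have hU : 0 < u^m := pow_pos hu m
  have hV : 0 < v^m := pow_pos hv m
  have hApos : 0 < u^m*u^m*u^2 + ((m:ℝ)+1)*(u^m*v^m)*v^2 := by positivity
  have hpow : v^(m+2) < u^(m+2) := by
    apply pow_lt_pow_left₀ huv hv.le
    omega
  have hid : (u^m*u^m*u^2 + ((m:ℝ)+1)*(u^m*v^m)*v^2) *
      ((((m:ℝ)+2) * (u^(m+1) * du - v^(m+1) * dv))^2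
      - ((m:ℝ)+2) * ((m:ℝ)+1) * (u^m * du^2 - v^m * dv^2) * (u^(m+2) - v^(m+2)))
      = ((m:ℝ)+2) * (((u^m*u^m*u^2 + ((m:ℝ)+1)*(u^m*v^m)*v^2)*du
          - (((m:ℝ)+2)*(u^m*v^m)*u*v)*dv)^2
        + ((m:ℝ)+1)*(u^m*v^m)*(u^(m+2)-v^(m+2))^2*dv^2) := by
    ring
  have hrhs : 0 < ((m:ℝ)+2) * (((u^m*u^m*u^2 + ((m:ℝ)+1)*(u^m*v^m)*v^2)*du
          - (((m:ℝ)+2)*(u^m*v^m)*u*v)*dv)^2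
        + ((m:ℝ)+1)*(u^m*v^m)*(u^(m+2)-v^(m+2))^2*dv^2) := by
    have hK : (0:ℝ) < (m:ℝ)+2 := by positivity
    rcases (not_and_or.mp hd) with hdu | hdv
    · rcases eq_or_ne dv 0 with rfl | hdv
      · have h1 : 0 < ((u^m*u^m*u^2 + ((m:ℝ)+1)*(u^m*v^m)*v^2)*du
            - (((m:ℝ)+2)*(u^m*v^m)*u*v)*(0:ℝ))^2 := by
          have : (u^m*u^m*u^2 + ((m:ℝ)+1)*(u^m*v^m)*v^2)*du
            - (((m:ℝ)+2)*(u^m*v^m)*u*v)*(0:ℝ)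
            = (u^m*u^m*u^2 + ((m:ℝ)+1)*(u^m*v^m)*v^2)*du := by ring
          rw [this]
          have hne : (u^m*u^m*u^2 + ((m:ℝ)+1)*(u^m*v^m)*v^2)*du ≠ 0 :=
            mul_ne_zero (ne_of_gt hApos) hdu
          positivity
        have h2 : (0:ℝ) ≤ ((m:ℝ)+1)*(u^m*v^m)*(u^(m+2)-v^(m+2))^2*(0:ℝ)^2 := by positivity
        exact mul_pos hK (by linarith)
      · have h1 : 0 < ((m:ℝ)+1)*(u^m*v^m)*(u^(m+2)-v^(m+2))^2*dv^2 := by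
          have h3 : (0:ℝ) < (u^(m+2)-v^(m+2))^2 := by
            have := sub_pos.2 hpow
            positivity
          have h4 : (0:ℝ) < dv^2 := by positivity
          positivity
        exact mul_pos hK (by nlinarith [h1, sq_nonneg ((u^m*u^m*u^2 + ((m:ℝ)+1)*(u^m*v^m)*v^2)*du
            - (((m:ℝ)+2)*(u^m*v^m)*u*v)*dv)])
    · have h1 : 0 < ((m:ℝ)+1)*(u^m*v^m)*(u^(m+2)-v^(m+2))^2*dv^2 := by
        have h3 : (0:ℝ) < (u^(m+2)-v^(m+2))^2 := by
          have := sub_pos.2 hpow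
          positivity
        have h4 : (0:ℝ) < dv^2 := by positivity
        positivity
      exact mul_pos hK (by nlinarith [h1, sq_nonneg ((u^m*u^m*u^2 + ((m:ℝ)+1)*(u^m*v^m)*v^2)*du
          - (((m:ℝ)+2)*(u^m*v^m)*u*v)*dv)])
  by_contra hcon
  push_neg at hcon
  have h5 : (((m:ℝ)+2) * (u^(m+1) * du - v^(m+1) * dv))^2
      - ((m:ℝ)+2) * ((m:ℝ)+1) * (u^m * du^2 - v^m * dv^2) * (u^(m+2) - v^(m+2)) ≤ 0 := by
    linarith
  linarith [mul_nonpos_of_nonneg_of_nonpos hApos.le h5, hid.ge, hid.le, hrhs]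

lemma lemN3 (m : ℕ) (a b d1 d2 : ℝ) (ha : 0 < a) (hb : 0 < b) (hab : a + b < 1) :
    ((m:ℝ)+2) * ((m:ℝ)+1) * ((1-a-b)^m*(d1+d2)^2 - (1-a)^m*d1^2 - (1-b)^m*d2^2) *
      (1 - (1-b)^(m+2) - (1-a)^(m+2) + (1-a-b)^(m+2)) ≤
    (((m:ℝ)+2) * (((1-a)^(m+1)-(1-a-b)^(m+1))*d1 + ((1-b)^(m+1)-(1-a-b)^(m+1))*d2))^2 := by
  have hγ0 : (0:ℝ) ≤ 1-a-b := by linarith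
  have hγα : (1:ℝ)-a-b ≤ 1-a := by linarith
  have hγβ : (1:ℝ)-a-b ≤ 1-b := by linarith
  have hS : ((1:ℝ)-a-b)^m ≤ (1-a)^m := pow_le_pow_left₀ hγ0 hγα m
  have hT : ((1:ℝ)-a-b)^m ≤ (1-b)^m := pow_le_pow_left₀ hγ0 hγβ m
  have hF : 0 < 1 - (1-b)^(m+2) - (1-a)^(m+2) + (1-a-b)^(m+2) := lemFpos m a b ha hb hab
  have hC : (0:ℝ) < ((m:ℝ)+2) * ((m:ℝ)+1) := by positivity
  have hγm : (0:ℝ) ≤ (1-a-b)^m := by positivity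
  rcases le_or_gt (d1*d2) 0 with hd | hd
  · have hH : (1-a-b)^m*(d1+d2)^2 - (1-a)^m*d1^2 - (1-b)^m*d2^2 ≤ 0 := by
      nlinarith [mul_le_mul_of_nonneg_right hS (sq_nonneg d1),
        mul_le_mul_of_nonneg_right hT (sq_nonneg d2),
        mul_nonpos_of_nonneg_of_nonpos hγm hd]
    have h1 : ((m:ℝ)+2) * ((m:ℝ)+1) * ((1-a-b)^m*(d1+d2)^2 - (1-a)^m*d1^2 - (1-b)^m*d2^2) *
        (1 - (1-b)^(m+2) - (1-a)^(m+2) + (1-a-b)^(m+2)) ≤ 0 := by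
      apply mul_nonpos_of_nonpos_of_nonneg _ hF.le
      exact mul_nonpos_of_nonneg_of_nonpos hC.le hH
    nlinarith [h1, sq_nonneg (((m:ℝ)+2) * (((1-a)^(m+1)-(1-a-b)^(m+1))*d1
      + ((1-b)^(m+1)-(1-a-b)^(m+1))*d2))]
  · set P : ℝ := (1-a)^(m+1)-(1-a-b)^(m+1) with hP
    set Q : ℝ := (1-b)^(m+1)-(1-a-b)^(m+1) with hQ
    set F : ℝ := 1 - (1-b)^(m+2) - (1-a)^(m+2) + (1-a-b)^(m+2) with hFd
    have hmain : ((m:ℝ)+1) * (1-a-b)^m * F ≤ 2 * ((m:ℝ)+2) * (P * Q) := by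
      have := lemMain m a b ha hb hab
      have heq : 1 - (1-a)^(m+2) - (1-b)^(m+2) + (1-a-b)^(m+2) = F := by rw [hFd]; ring
      rw [heq] at this
      exact this
    have hH : (1-a-b)^m*(d1+d2)^2 - (1-a)^m*d1^2 - (1-b)^m*d2^2 ≤
        2*(1-a-b)^m*(d1*d2) := by
      nlinarith [mul_le_mul_of_nonneg_right hS (sq_nonneg d1),
        mul_le_mul_of_nonneg_right hT (sq_nonneg d2)]
    have step1 : ((m:ℝ)+2) * ((m:ℝ)+1) * ((1-a-b)^m*(d1+d2)^2 - (1-a)^m*d1^2 - (1-b)^m*d2^2) *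
        F ≤ ((m:ℝ)+2) * ((m:ℝ)+1) * (2*(1-a-b)^m*(d1*d2)) * F := by
      apply mul_le_mul_of_nonneg_right _ hF.le
      exact mul_le_mul_of_nonneg_left hH hC.le
    have step2 : ((m:ℝ)+2) * ((m:ℝ)+1) * (2*(1-a-b)^m*(d1*d2)) * F =
        (((m:ℝ)+2) * (2*(d1*d2))) * (((m:ℝ)+1) * (1-a-b)^m * F) := by ring
    have step3 : (((m:ℝ)+2) * (2*(d1*d2))) * (((m:ℝ)+1) * (1-a-b)^m * F) ≤
        (((m:ℝ)+2) * (2*(d1*d2))) * (2 * ((m:ℝ)+2) * (P * Q)) := by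
      apply mul_le_mul_of_nonneg_left hmain
      positivity
    have step4 : (((m:ℝ)+2) * (2*(d1*d2))) * (2 * ((m:ℝ)+2) * (P * Q)) ≤
        (((m:ℝ)+2) * (P*d1 + Q*d2))^2 := by
      nlinarith [sq_nonneg (((m:ℝ)+2) * (P*d1 - Q*d2)), sq_nonneg ((m:ℝ)+2)]
    calc ((m:ℝ)+2) * ((m:ℝ)+1) * ((1-a-b)^m*(d1+d2)^2 - (1-a)^m*d1^2 - (1-b)^m*d2^2) * F
        ≤ ((m:ℝ)+2) * ((m:ℝ)+1) * (2*(1-a-b)^m*(d1*d2)) * F := step1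
      _ = (((m:ℝ)+2) * (2*(d1*d2))) * (((m:ℝ)+1) * (1-a-b)^m * F) := step2
      _ ≤ (((m:ℝ)+2) * (2*(d1*d2))) * (2 * ((m:ℝ)+2) * (P * Q)) := step3
      _ ≤ (((m:ℝ)+2) * (P*d1 + Q*d2))^2 := step4

/-- generic: strict concavity of `x * log (P t)` on `[0,1]`. -/
lemma term_strict (x : ℝ) (hx : 0 < x) (P P' P'' : ℝ → ℝ)
    (hP : ∀ t : ℝ, HasDerivAt P (P' t) t) (hP' : ∀ t : ℝ, HasDerivAt P' (P'' t) t)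
    (hpos : ∀ t ∈ Set.Icc (0:ℝ) 1, 0 < P t)
    (hN : ∀ t ∈ Set.Ioo (0:ℝ) 1, P'' t * P t - P' t ^ 2 < 0) :
    StrictConcaveOn ℝ (Set.Icc (0:ℝ) 1) (fun t => x * Real.log (P t)) := by
  have hIoo : Set.Ioo (0:ℝ) 1 ⊆ Set.Icc 0 1 := Set.Ioo_subset_Icc_self
  have hlog : ∀ t ∈ Set.Ioo (0:ℝ) 1,
      HasDerivAt (fun s => x * Real.log (P s)) (x * (P' t / P t)) t := by
    intro t ht
    have h1 := (Real.hasDerivAt_log (ne_of_gt (hpos t (hIoo ht)))).comp t (hP t)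
    have h2 := h1.const_mul x
    refine (h2).congr_deriv ?_
    field_simp
  have hlog2 : ∀ t ∈ Set.Ioo (0:ℝ) 1,
      HasDerivAt (fun s => x * (P' s / P s)) (x * ((P'' t * P t - P' t ^ 2) / P t ^ 2)) t := by
    intro t ht
    have h1 := ((hP' t).div (hP t) (ne_of_gt (hpos t (hIoo ht)))).const_mul x
    refine (h1).congr_deriv ?_
    ring
  apply strictConcaveOn_of_deriv2_neg (convex_Icc 0 1)
  · intro t ht
    exact (continuousAt_const.mul ((Real.continuousAt_log
      (ne_of_gt (hpos t ht))).comp (hP t).continuousAt)).continuousWithinAt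
  · intro t ht
    rw [interior_Icc] at ht
    have hev : deriv (fun s => x * Real.log (P s)) =ᶠ[nhds t] (fun s => x * (P' s / P s)) :=
      Filter.eventuallyEq_of_mem (isOpen_Ioo.mem_nhds ht) (fun s hs => (hlog s hs).deriv)
    have h2 : deriv^[2] (fun s => x * Real.log (P s)) t
        = deriv (deriv (fun s => x * Real.log (P s))) t := rfl
    rw [h2, hev.deriv_eq, (hlog2 t ht).deriv]
    exact mul_neg_of_pos_of_neg hx
      (div_neg_of_neg_of_pos (hN t ht) (pow_pos (hpos t (hIoo ht)) 2))

/-- generic: concavity of `x * log (P t)` on `[0,1]`. -/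
lemma term_concave (x : ℝ) (hx : 0 < x) (P P' P'' : ℝ → ℝ)
    (hP : ∀ t : ℝ, HasDerivAt P (P' t) t) (hP' : ∀ t : ℝ, HasDerivAt P' (P'' t) t)
    (hpos : ∀ t ∈ Set.Icc (0:ℝ) 1, 0 < P t)
    (hN : ∀ t ∈ Set.Ioo (0:ℝ) 1, P'' t * P t - P' t ^ 2 ≤ 0) :
    ConcaveOn ℝ (Set.Icc (0:ℝ) 1) (fun t => x * Real.log (P t)) := by
  have hIoo : Set.Ioo (0:ℝ) 1 ⊆ Set.Icc 0 1 := Set.Ioo_subset_Icc_self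
  have hlog : ∀ t ∈ Set.Ioo (0:ℝ) 1,
      HasDerivAt (fun s => x * Real.log (P s)) (x * (P' t / P t)) t := by
    intro t ht
    have h1 := (Real.hasDerivAt_log (ne_of_gt (hpos t (hIoo ht)))).comp t (hP t)
    have h2 := h1.const_mul x
    refine (h2).congr_deriv ?_
    field_simp
  have hlog2 : ∀ t ∈ Set.Ioo (0:ℝ) 1,
      HasDerivAt (fun s => x * (P' s / P s)) (x * ((P'' t * P t - P' t ^ 2) / P t ^ 2)) t := by
    intro t ht
    have h1 := ((hP' t).div (hP t) (ne_of_gt (hpos t (hIoo ht)))).const_mul x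
    refine (h1).congr_deriv ?_
    ring
  apply concaveOn_of_deriv2_nonpos (convex_Icc 0 1)
  · intro t ht
    exact (continuousAt_const.mul ((Real.continuousAt_log
      (ne_of_gt (hpos t ht))).comp (hP t).continuousAt)).continuousWithinAt
  · intro t ht
    rw [interior_Icc] at ht
    exact (hlog t ht).differentiableAt.differentiableWithinAt
  · intro t ht
    rw [interior_Icc] at ht
    have hev : deriv (fun s => x * Real.log (P s)) =ᶠ[nhds t] (fun s => x * (P' s / P s)) :=
      Filter.eventuallyEq_of_mem (isOpen_Ioo.mem_nhds ht) (fun s hs => (hlog s hs).deriv)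
    exact ((hev.differentiableAt_iff).mpr
      (hlog2 t ht).differentiableAt).differentiableWithinAt
  · intro t ht
    rw [interior_Icc] at ht
    have hev : deriv (fun s => x * Real.log (P s)) =ᶠ[nhds t] (fun s => x * (P' s / P s)) :=
      Filter.eventuallyEq_of_mem (isOpen_Ioo.mem_nhds ht) (fun s hs => (hlog s hs).deriv)
    have h2 : deriv^[2] (fun s => x * Real.log (P s)) t
        = deriv (deriv (fun s => x * Real.log (P s))) t := rfl
    rw [h2, hev.deriv_eq, (hlog2 t ht).deriv]
    exact mul_nonpos_of_nonneg_of_nonpos hx.le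
      (div_nonpos_of_nonpos_of_nonneg (hN t ht) (pow_nonneg (hpos t (hIoo ht)).le 2))

lemma core (m : ℕ) (x00 x10 x01 x11 : ℝ)
    (h00 : 0 < x00) (h10 : 0 < x10) (h01 : 0 < x01) (h11 : 0 < x11)
    (c1 c2 d1 d2 : ℝ) (hd : ¬(d1 = 0 ∧ d2 = 0))
    (hmem : ∀ t ∈ Set.Icc (0:ℝ) 1,
      0 < c1 + t*d1 ∧ 0 < c2 + t*d2 ∧ (c1 + t*d1) + (c2 + t*d2) < 1) :
    StrictConcaveOn ℝ (Set.Icc (0:ℝ) 1) (fun t =>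
      x00 * Real.log ((1 - (c1+t*d1) - (c2+t*d2)) ^ (m+2)) +
      x10 * Real.log ((1 - (c2+t*d2)) ^ (m+2) - (1 - (c1+t*d1) - (c2+t*d2)) ^ (m+2)) +
      x01 * Real.log ((1 - (c1+t*d1)) ^ (m+2) - (1 - (c1+t*d1) - (c2+t*d2)) ^ (m+2)) +
      x11 * Real.log (1 - (1 - (c2+t*d2)) ^ (m+2) - (1 - (c1+t*d1)) ^ (m+2) +
        (1 - (c1+t*d1) - (c2+t*d2)) ^ (m+2))) := by
  -- affine bases
  have hA : ∀ t : ℝ, HasDerivAt (fun s : ℝ => 1 - (c1+s*d1) - (c2+s*d2)) (-(d1+d2)) t := by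
    intro t
    have h1 : HasDerivAt (fun s : ℝ => c1 + s*d1) d1 t := by
      simpa using ((hasDerivAt_id t).mul_const d1).const_add c1
    have h2 : HasDerivAt (fun s : ℝ => c2 + s*d2) d2 t := by
      simpa using ((hasDerivAt_id t).mul_const d2).const_add c2
    have := (h1.const_sub 1).sub h2
    refine (this).congr_deriv ?_
    ring
  have hB : ∀ t : ℝ, HasDerivAt (fun s : ℝ => 1 - (c2+s*d2)) (-d2) t := by
    intro t
    have h2 : HasDerivAt (fun s : ℝ => c2 + s*d2) d2 t := by
      simpa using ((hasDerivAt_id t).mul_const d2).const_add c2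
    simpa using h2.const_sub 1
  have hC : ∀ t : ℝ, HasDerivAt (fun s : ℝ => 1 - (c1+s*d1)) (-d1) t := by
    intro t
    have h1 : HasDerivAt (fun s : ℝ => c1 + s*d1) d1 t := by
      simpa using ((hasDerivAt_id t).mul_const d1).const_add c1
    simpa using h1.const_sub 1
  -- term 0
  have s0 : ConcaveOn ℝ (Set.Icc (0:ℝ) 1)
      (fun t => x00 * Real.log ((1 - (c1+t*d1) - (c2+t*d2)) ^ (m+2))) := by
    apply term_concave x00 h00 _
      (fun t => ((m:ℝ)+2) * ((1 - (c1+t*d1) - (c2+t*d2))^(m+1) * (-(d1+d2))))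
      (fun t => ((m:ℝ)+2) * (((m:ℝ)+1) * ((1 - (c1+t*d1) - (c2+t*d2))^m * (d1+d2)^2)))
    · intro t
      have := (hA t).pow (m+2)
      refine (this).congr_deriv ?_
      push_cast
      ring
    · intro t
      have := (((hA t).pow (m+1)).mul_const (-(d1+d2))).const_mul ((m:ℝ)+2)
      refine (this).congr_deriv ?_
      push_cast
      ring
    · intro t ht
      obtain ⟨h1, h2, h3⟩ := hmem t ht
      have h4 : (0:ℝ) < 1 - (c1+t*d1) - (c2+t*d2) := by linarith
      positivity
    · intro t ht
      obtain ⟨h1, h2, h3⟩ := hmem t (Set.Ioo_subset_Icc_self ht)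
      have hA0 : (0:ℝ) ≤ 1 - (c1+t*d1) - (c2+t*d2) := by linarith
      have hkey : ((m:ℝ)+2) * (((m:ℝ)+1) * ((1 - (c1+t*d1) - (c2+t*d2))^m * (d1+d2)^2)) *
            (1 - (c1+t*d1) - (c2+t*d2)) ^ (m+2) -
          (((m:ℝ)+2) * ((1 - (c1+t*d1) - (c2+t*d2))^(m+1) * (-(d1+d2))))^2
          = -(((m:ℝ)+2) * ((1 - (c1+t*d1) - (c2+t*d2))^m *
              (1 - (c1+t*d1) - (c2+t*d2))^m * (1 - (c1+t*d1) - (c2+t*d2))^2 * (d1+d2)^2)) := by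
        ring
      rw [hkey]
      apply neg_nonpos_of_nonneg
      positivity
  -- term 1 (strict)
  have s1 : StrictConcaveOn ℝ (Set.Icc (0:ℝ) 1)
      (fun t => x10 * Real.log ((1 - (c2+t*d2)) ^ (m+2) -
        (1 - (c1+t*d1) - (c2+t*d2)) ^ (m+2))) := by
    apply term_strict x10 h10 _
      (fun t => ((m:ℝ)+2) * ((1 - (c2+t*d2))^(m+1) * (-d2) -
        (1 - (c1+t*d1) - (c2+t*d2))^(m+1) * (-(d1+d2))))
      (fun t => ((m:ℝ)+2) * ((m:ℝ)+1) * ((1 - (c2+t*d2))^m * (-d2)^2 -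
        (1 - (c1+t*d1) - (c2+t*d2))^m * (-(d1+d2))^2))
    · intro t
      have := ((hB t).pow (m+2)).sub ((hA t).pow (m+2))
      refine (this).congr_deriv ?_
      push_cast
      ring
    · intro t
      have := ((((hB t).pow (m+1)).mul_const (-d2)).sub
        (((hA t).pow (m+1)).mul_const (-(d1+d2)))).const_mul ((m:ℝ)+2)
      refine (this).congr_deriv ?_
      push_cast
      ring
    · intro t ht
      obtain ⟨h1, h2, h3⟩ := hmem t ht
      have hlt : 1 - (c1+t*d1) - (c2+t*d2) < 1 - (c2+t*d2) := by linarith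
      have h0 : (0:ℝ) ≤ 1 - (c1+t*d1) - (c2+t*d2) := by linarith
      exact sub_pos.2 (pow_lt_pow_left₀ hlt h0 (by omega))
    · intro t ht
      obtain ⟨h1, h2, h3⟩ := hmem t (Set.Ioo_subset_Icc_self ht)
      have hv : (0:ℝ) < 1 - (c1+t*d1) - (c2+t*d2) := by linarith
      have huv : 1 - (c1+t*d1) - (c2+t*d2) < 1 - (c2+t*d2) := by linarith
      have hd' : ¬((-d2) = 0 ∧ (-(d1+d2)) = 0) := by
        rintro ⟨e1, e2⟩
        exact hd ⟨by linarith, by linarith⟩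
      have := lemN1 m (1 - (c2+t*d2)) (1 - (c1+t*d1) - (c2+t*d2)) (-d2) (-(d1+d2)) hv huv hd'
      nlinarith [this]
  -- term 2
  have s2 : ConcaveOn ℝ (Set.Icc (0:ℝ) 1)
      (fun t => x01 * Real.log ((1 - (c1+t*d1)) ^ (m+2) -
        (1 - (c1+t*d1) - (c2+t*d2)) ^ (m+2))) := by
    apply term_concave x01 h01 _
      (fun t => ((m:ℝ)+2) * ((1 - (c1+t*d1))^(m+1) * (-d1) -
        (1 - (c1+t*d1) - (c2+t*d2))^(m+1) * (-(d1+d2))))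
      (fun t => ((m:ℝ)+2) * ((m:ℝ)+1) * ((1 - (c1+t*d1))^m * (-d1)^2 -
        (1 - (c1+t*d1) - (c2+t*d2))^m * (-(d1+d2))^2))
    · intro t
      have := ((hC t).pow (m+2)).sub ((hA t).pow (m+2))
      refine (this).congr_deriv ?_
      push_cast
      ring
    · intro t
      have := ((((hC t).pow (m+1)).mul_const (-d1)).sub
        (((hA t).pow (m+1)).mul_const (-(d1+d2)))).const_mul ((m:ℝ)+2)
      refine (this).congr_deriv ?_
      push_cast
      ring
    · intro t ht
      obtain ⟨h1, h2, h3⟩ := hmem t ht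
      have hlt : 1 - (c1+t*d1) - (c2+t*d2) < 1 - (c1+t*d1) := by linarith
      have h0 : (0:ℝ) ≤ 1 - (c1+t*d1) - (c2+t*d2) := by linarith
      exact sub_pos.2 (pow_lt_pow_left₀ hlt h0 (by omega))
    · intro t ht
      obtain ⟨h1, h2, h3⟩ := hmem t (Set.Ioo_subset_Icc_self ht)
      have hv : (0:ℝ) < 1 - (c1+t*d1) - (c2+t*d2) := by linarith
      have huv : 1 - (c1+t*d1) - (c2+t*d2) < 1 - (c1+t*d1) := by linarith
      have hd' : ¬((-d1) = 0 ∧ (-(d1+d2)) = 0) := by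
        rintro ⟨e1, e2⟩
        exact hd ⟨by linarith, by linarith⟩
      have := lemN1 m (1 - (c1+t*d1)) (1 - (c1+t*d1) - (c2+t*d2)) (-d1) (-(d1+d2)) hv huv hd'
      nlinarith [this]
  -- term 3
  have s3 : ConcaveOn ℝ (Set.Icc (0:ℝ) 1)
      (fun t => x11 * Real.log (1 - (1 - (c2+t*d2)) ^ (m+2) - (1 - (c1+t*d1)) ^ (m+2) +
        (1 - (c1+t*d1) - (c2+t*d2)) ^ (m+2))) := by
    apply term_concave x11 h11 _
      (fun t => ((m:ℝ)+2) * (((1 - (c1+t*d1))^(m+1) - (1 - (c1+t*d1) - (c2+t*d2))^(m+1))*d1 +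
        ((1 - (c2+t*d2))^(m+1) - (1 - (c1+t*d1) - (c2+t*d2))^(m+1))*d2))
      (fun t => ((m:ℝ)+2) * ((m:ℝ)+1) *
        ((1 - (c1+t*d1) - (c2+t*d2))^m*(d1+d2)^2 - (1 - (c1+t*d1))^m*d1^2 -
          (1 - (c2+t*d2))^m*d2^2))
    · intro t
      have := ((((hB t).pow (m+2)).const_sub 1).sub ((hC t).pow (m+2))).add ((hA t).pow (m+2))
      refine (this).congr_deriv ?_
      push_cast
      ring
    · intro t
      have := (((((hC t).pow (m+1)).sub ((hA t).pow (m+1))).mul_const d1).add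
        ((((hB t).pow (m+1)).sub ((hA t).pow (m+1))).mul_const d2)).const_mul ((m:ℝ)+2)
      refine (this).congr_deriv ?_
      push_cast
      ring
    · intro t ht
      obtain ⟨h1, h2, h3⟩ := hmem t ht
      exact lemFpos m (c1+t*d1) (c2+t*d2) h1 h2 h3
    · intro t ht
      obtain ⟨h1, h2, h3⟩ := hmem t (Set.Ioo_subset_Icc_self ht)
      have := lemN3 m (c1+t*d1) (c2+t*d2) d1 d2 h1 h2 h3
      nlinarith [this]
  have := ((s0.add_strictConcaveOn s1).add_concaveOn s2).add_concaveOn s3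
  exact this

lemma tri_mem (m : ℕ) (a b : ℝ) (ha : 0 < a) (hb : 0 < b) (hab : a + b < 1) :
    0 < (1 - a - b) ^ (m+2) ∧
    0 < (1 - b) ^ (m+2) - (1 - a - b) ^ (m+2) ∧
    0 < (1 - a) ^ (m+2) - (1 - a - b) ^ (m+2) ∧
    0 < 1 - (1 - b) ^ (m+2) - (1 - a) ^ (m+2) + (1 - a - b) ^ (m+2) := by
  have h0 : (0:ℝ) < 1 - a - b := by linarith
  refine ⟨by positivity, ?_, ?_, lemFpos m a b ha hb hab⟩
  · exact sub_pos.2 (pow_lt_pow_left₀ (by linarith) h0.le (by omega))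
  · exact sub_pos.2 (pow_lt_pow_left₀ (by linarith) h0.le (by omega))

/-- strict concavity of the reduced two-parameter log-likelihood
(p11 = 0, p00 = 1 − p10 − p01), with q.1 = p10 and q.2 = p01. -/
theorem stmt_10 (k : ℕ) (hk : 1 ≤ k) (x00 x10 x01 x11 : ℝ)
    (h00 : 0 < x00) (h10 : 0 < x10) (h01 : 0 < x01) (h11 : 0 < x11) :
    StrictConcaveOn ℝ
      {q : ℝ × ℝ | 0 < q.1 ∧ 0 < q.2 ∧ q.1 + q.2 < 1 ∧
        0 < (1 - q.1 - q.2) ^ k ∧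
        0 < (1 - q.2) ^ k - (1 - q.1 - q.2) ^ k ∧
        0 < (1 - q.1) ^ k - (1 - q.1 - q.2) ^ k ∧
        0 < 1 - (1 - q.2) ^ k - (1 - q.1) ^ k + (1 - q.1 - q.2) ^ k}
      (fun q : ℝ × ℝ =>
        x00 * Real.log ((1 - q.1 - q.2) ^ k) +
        x10 * Real.log ((1 - q.2) ^ k - (1 - q.1 - q.2) ^ k) +
        x01 * Real.log ((1 - q.1) ^ k - (1 - q.1 - q.2) ^ k) +
        x11 * Real.log (1 - (1 - q.2) ^ k - (1 - q.1) ^ k + (1 - q.1 - q.2) ^ k)) := by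
  rcases Nat.lt_or_ge k 2 with hk2 | hk2
  · -- k = 1 : the set is empty
    have hk1 : k = 1 := by omega
    subst hk1
    have hempty : {q : ℝ × ℝ | 0 < q.1 ∧ 0 < q.2 ∧ q.1 + q.2 < 1 ∧
        0 < (1 - q.1 - q.2) ^ 1 ∧
        0 < (1 - q.2) ^ 1 - (1 - q.1 - q.2) ^ 1 ∧
        0 < (1 - q.1) ^ 1 - (1 - q.1 - q.2) ^ 1 ∧
        0 < 1 - (1 - q.2) ^ 1 - (1 - q.1) ^ 1 + (1 - q.1 - q.2) ^ 1} = ∅ := by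
      ext q
      simp only [Set.mem_setOf_eq, Set.mem_empty_iff_false, iff_false, not_and]
      intro h1 h2 h3 h4 h5 h6
      simp only [pow_one]
      linarith
    rw [hempty]
    exact ⟨convex_empty, fun x hx => absurd hx (Set.notMem_empty x)⟩
  · obtain ⟨m, rfl⟩ : ∃ m, k = m + 2 := ⟨k - 2, by omega⟩
    constructor
    · -- convexity
      intro p hp q hq wa wb hwa hwb hsum
      simp only [Set.mem_setOf_eq] at hp hq ⊢
      obtain ⟨hp1, hp2, hp3, -⟩ := hp
      obtain ⟨hq1, hq2, hq3, -⟩ := hq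
      have hco1 : (wa • p + wb • q).1 = wa * p.1 + wb * q.1 := by
        simp [Prod.fst_add, Prod.smul_fst, smul_eq_mul]
      have hco2 : (wa • p + wb • q).2 = wa * p.2 + wb * q.2 := by
        simp [Prod.snd_add, Prod.smul_snd, smul_eq_mul]
      rw [hco1, hco2]
      have hhalf : (1/2 : ℝ) ≤ wa ∨ (1/2:ℝ) ≤ wb := by
        rcases le_total wa (1/2) with h | h
        · right; linarith
        · left; linarith
      have h1 : 0 < wa * p.1 + wb * q.1 := by
        rcases hhalf with hh | hh <;>
          nlinarith [mul_nonneg hwa hp1.le, mul_nonneg hwb hq1.le]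
      have h2 : 0 < wa * p.2 + wb * q.2 := by
        rcases hhalf with hh | hh <;>
          nlinarith [mul_nonneg hwa hp2.le, mul_nonneg hwb hq2.le]
      have h3 : (wa * p.1 + wb * q.1) + (wa * p.2 + wb * q.2) < 1 := by
        rcases hhalf with hh | hh <;>
          nlinarith [mul_nonneg hwa (by linarith : (0:ℝ) ≤ 1 - p.1 - p.2),
            mul_nonneg hwb (by linarith : (0:ℝ) ≤ 1 - q.1 - q.2)]
      obtain ⟨c4, c5, c6, c7⟩ := tri_mem m _ _ h1 h2 h3
      exact ⟨h1, h2, h3, c4, c5, c6, c7⟩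
    · -- strict concavity inequality
      intro p hp q hq hpq wa wb hwa hwb hsum
      simp only [Set.mem_setOf_eq] at hp hq
      obtain ⟨hp1, hp2, hp3, -⟩ := hp
      obtain ⟨hq1, hq2, hq3, -⟩ := hq
      have hd : ¬(q.1 - p.1 = 0 ∧ q.2 - p.2 = 0) := by
        rintro ⟨e1, e2⟩
        exact hpq (Prod.ext_iff.2 ⟨by linarith, by linarith⟩)
      have hmem : ∀ t ∈ Set.Icc (0:ℝ) 1,
          0 < p.1 + t*(q.1 - p.1) ∧ 0 < p.2 + t*(q.2 - p.2) ∧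
          (p.1 + t*(q.1 - p.1)) + (p.2 + t*(q.2 - p.2)) < 1 := by
        intro t ht
        obtain ⟨ht0, ht1⟩ := ht
        rcases le_or_gt t (1/2) with hth | hth
        · refine ⟨by nlinarith, by nlinarith, by nlinarith⟩
        · refine ⟨by nlinarith, by nlinarith, by nlinarith⟩
      have hsc := core m x00 x10 x01 x11 h00 h10 h01 h11 p.1 p.2 (q.1 - p.1) (q.2 - p.2) hd hmem
      set G : ℝ → ℝ := (fun t =>
        x00 * Real.log ((1 - (p.1+t*(q.1-p.1)) - (p.2+t*(q.2-p.2))) ^ (m+2)) +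
        x10 * Real.log ((1 - (p.2+t*(q.2-p.2))) ^ (m+2) - (1 - (p.1+t*(q.1-p.1)) - (p.2+t*(q.2-p.2))) ^ (m+2)) +
        x01 * Real.log ((1 - (p.1+t*(q.1-p.1))) ^ (m+2) - (1 - (p.1+t*(q.1-p.1)) - (p.2+t*(q.2-p.2))) ^ (m+2)) +
        x11 * Real.log (1 - (1 - (p.2+t*(q.2-p.2))) ^ (m+2) - (1 - (p.1+t*(q.1-p.1))) ^ (m+2) +
          (1 - (p.1+t*(q.1-p.1)) - (p.2+t*(q.2-p.2))) ^ (m+2))) with hG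
      have key := hsc.2 (Set.left_mem_Icc.2 zero_le_one) (Set.right_mem_Icc.2 zero_le_one)
        (by norm_num) hwa hwb hsum
      have hwa' : wa = 1 - wb := by linarith
      subst hwa'
      simp only [smul_eq_mul] at key ⊢
      norm_num at key
      have hco1 : ((1-wb) • p + wb • q).1 = p.1 + wb * (q.1 - p.1) := by
        simp [Prod.fst_add, Prod.smul_fst, smul_eq_mul]
        ring
      have hco2 : ((1-wb) • p + wb • q).2 = p.2 + wb * (q.2 - p.2) := by
        simp [Prod.snd_add, Prod.smul_snd, smul_eq_mul]
        ring
      rw [hco1, hco2]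
      have hg0 : G 0 = x00 * Real.log ((1 - p.1 - p.2) ^ (m+2)) +
          x10 * Real.log ((1 - p.2) ^ (m+2) - (1 - p.1 - p.2) ^ (m+2)) +
          x01 * Real.log ((1 - p.1) ^ (m+2) - (1 - p.1 - p.2) ^ (m+2)) +
          x11 * Real.log (1 - (1 - p.2) ^ (m+2) - (1 - p.1) ^ (m+2) + (1 - p.1 - p.2) ^ (m+2)) := by
        rw [hG]
        norm_num
      have hg1 : G 1 = x00 * Real.log ((1 - q.1 - q.2) ^ (m+2)) +
          x10 * Real.log ((1 - q.2) ^ (m+2) - (1 - q.1 - q.2) ^ (m+2)) +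
          x01 * Real.log ((1 - q.1) ^ (m+2) - (1 - q.1 - q.2) ^ (m+2)) +
          x11 * Real.log (1 - (1 - q.2) ^ (m+2) - (1 - q.1) ^ (m+2) + (1 - q.1 - q.2) ^ (m+2)) := by
        rw [hG]
        norm_num
      rw [hg0, hg1] at key
      exact key
end

section
/- Let x = (x00, x10, x01, x11) be multinomial(n, θ) with θ the pooled-model probabilities arising from p with all components positive, and let g(x) = ((x00+x10)/n)^{1/k} + ((x00+x01)/n)^{1/k} − (x00/n)^{1/k}. Then g(x) converges almost surely as n → ∞ to p00 + p10 + p01 < 1, and hence P(x ∈ R_n) → 1, where R_n = {x : g(x) < 1}. -/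
open MeasureTheory ProbabilityTheory Filter

/-- strong-law convergence of g(x) to p00 + p10 + p01 < 1, and hence
P(x ∈ R_n) → 1. Here `A i`, `B i`, `C i` are the (iid) indicators contributing to the
cumulative counts x00, x00 + x10, x00 + x01 for the i-th pool, with means
θ00 = p00^k, θ00 + θ10 = (p00+p10)^k, θ00 + θ01 = (p00+p01)^k. -/
theorem stmt_15 {Ω : Type*} [MeasurableSpace Ω] (μ : Measure Ω) [IsProbabilityMeasure μ]
    (k : ℕ) (hk : 1 ≤ k)
    (p00 p10 p01 p11 : ℝ)
    (h00 : 0 < p00) (h10 : 0 < p10) (h01 : 0 < p01) (h11 : 0 < p11)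
    (hsum : p00 + p10 + p01 + p11 = 1)
    (A B C : ℕ → Ω → ℝ)
    (hmA : ∀ i, Measurable (A i)) (hmB : ∀ i, Measurable (B i)) (hmC : ∀ i, Measurable (C i))
    (hindA : Pairwise fun i j => IndepFun (A i) (A j) μ)
    (hindB : Pairwise fun i j => IndepFun (B i) (B j) μ)
    (hindC : Pairwise fun i j => IndepFun (C i) (C j) μ)
    (hidA : ∀ i, IdentDistrib (A i) (A 0) μ μ)
    (hidB : ∀ i, IdentDistrib (B i) (B 0) μ μ)
    (hidC : ∀ i, IdentDistrib (C i) (C 0) μ μ)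
    (hiA : Integrable (A 0) μ) (hiB : Integrable (B 0) μ) (hiC : Integrable (C 0) μ)
    (hEA : ∫ ω, A 0 ω ∂μ = p00 ^ k)
    (hEB : ∫ ω, B 0 ω ∂μ = (p00 + p10) ^ k)
    (hEC : ∫ ω, C 0 ω ∂μ = (p00 + p01) ^ k) :
    (∀ᵐ ω ∂μ, Tendsto (fun n : ℕ =>
        ((∑ i ∈ Finset.range n, B i ω) / n) ^ ((1 : ℝ) / k) +
        ((∑ i ∈ Finset.range n, C i ω) / n) ^ ((1 : ℝ) / k) -
        ((∑ i ∈ Finset.range n, A i ω) / n) ^ ((1 : ℝ) / k)) atTop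
        (nhds (p00 + p10 + p01))) ∧
    p00 + p10 + p01 < 1 ∧
    Tendsto (fun n : ℕ => μ {ω |
        ((∑ i ∈ Finset.range n, B i ω) / n) ^ ((1 : ℝ) / k) +
        ((∑ i ∈ Finset.range n, C i ω) / n) ^ ((1 : ℝ) / k) -
        ((∑ i ∈ Finset.range n, A i ω) / n) ^ ((1 : ℝ) / k) < 1}) atTop (nhds 1) := by
  have hkpos : (0:ℝ) < k := by exact_mod_cast hk
  have hk0 : (k:ℝ) ≠ 0 := ne_of_gt hkpos
  have hexp : (0:ℝ) ≤ 1 / k := by positivity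
  have hpow : ∀ q : ℝ, 0 ≤ q → ((q ^ k : ℝ)) ^ ((1:ℝ)/k) = q := by
    intro q hq
    rw [← Real.rpow_natCast q k, ← Real.rpow_mul hq, mul_one_div, div_self hk0, Real.rpow_one]
  have hc : p00 + p10 + p01 < 1 := by linarith
  have hA := ProbabilityTheory.strong_law_ae_real A hiA hindA hidA
  have hB := ProbabilityTheory.strong_law_ae_real B hiB hindB hidB
  have hC := ProbabilityTheory.strong_law_ae_real C hiC hindC hidC
  rw [hEA] at hA; rw [hEB] at hB; rw [hEC] at hC
  have hg : ∀ᵐ ω ∂μ, Tendsto (fun n : ℕ =>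
        ((∑ i ∈ Finset.range n, B i ω) / n) ^ ((1 : ℝ) / k) +
        ((∑ i ∈ Finset.range n, C i ω) / n) ^ ((1 : ℝ) / k) -
        ((∑ i ∈ Finset.range n, A i ω) / n) ^ ((1 : ℝ) / k)) atTop
        (nhds (p00 + p10 + p01)) := by
    filter_upwards [hA, hB, hC] with ω hA hB hC
    have tB := (hB.rpow_const (Or.inr hexp))
    have tC := (hC.rpow_const (Or.inr hexp))
    have tA := (hA.rpow_const (Or.inr hexp))
    rw [hpow _ h00.le] at tA
    rw [hpow _ (by linarith : (0:ℝ) ≤ p00 + p10)] at tB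
    rw [hpow _ (by linarith : (0:ℝ) ≤ p00 + p01)] at tC
    have := (tB.add tC).sub tA
    convert this using 2
    ring
  refine ⟨hg, hc, ?_⟩
  set g : ℕ → Ω → ℝ := fun n ω =>
        ((∑ i ∈ Finset.range n, B i ω) / n) ^ ((1 : ℝ) / k) +
        ((∑ i ∈ Finset.range n, C i ω) / n) ^ ((1 : ℝ) / k) -
        ((∑ i ∈ Finset.range n, A i ω) / n) ^ ((1 : ℝ) / k) with hgdef
  have hmg : ∀ n, Measurable (g n) := by
    intro n
    have hsA : Measurable fun ω => (∑ i ∈ Finset.range n, A i ω) / n :=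
      (Finset.measurable_sum _ fun i _ => hmA i).div_const _
    have hsB : Measurable fun ω => (∑ i ∈ Finset.range n, B i ω) / n :=
      (Finset.measurable_sum _ fun i _ => hmB i).div_const _
    have hsC : Measurable fun ω => (∑ i ∈ Finset.range n, C i ω) / n :=
      (Finset.measurable_sum _ fun i _ => hmC i).div_const _
    have hcont : Continuous fun x : ℝ => x ^ ((1:ℝ)/k) := Real.continuous_rpow_const hexp
    exact (((hcont.measurable.comp hsB).add (hcont.measurable.comp hsC)).sub
      (hcont.measurable.comp hsA))
  have htm : MeasureTheory.TendstoInMeasure μ g atTop (fun _ => p00 + p10 + p01) :=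
    MeasureTheory.tendstoInMeasure_of_tendsto_ae (fun n => (hmg n).aestronglyMeasurable) hg
  have hcomp : Tendsto (fun n => μ {ω | 1 ≤ g n ω}) atTop (nhds 0) := by
    have hε : (0:ℝ) < 1 - (p00 + p10 + p01) := by linarith
    have := tendstoInMeasure_iff_dist.mp htm (1 - (p00 + p10 + p01)) hε
    refine tendsto_of_tendsto_of_tendsto_of_le_of_le tendsto_const_nhds this
      (fun n => zero_le) (fun n => measure_mono ?_)
    intro ω hω
    simp only [Set.mem_setOf_eq] at hω ⊢
    rw [Real.dist_eq, abs_of_nonneg (by linarith)]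
    linarith
  have key : ∀ n, μ {ω | g n ω < 1} = 1 - μ {ω | 1 ≤ g n ω} := by
    intro n
    have hmeas : MeasurableSet {ω | 1 ≤ g n ω} := measurableSet_le measurable_const (hmg n)
    have : {ω | g n ω < 1} = {ω | 1 ≤ g n ω}ᶜ := by
      ext ω; simp [not_le]
    rw [this, prob_compl_eq_one_sub hmeas]
  show Tendsto (fun n => μ {ω | g n ω < 1}) atTop (nhds 1)
  simp only [key]
  have : Tendsto (fun n => (1:ENNReal) - μ {ω | 1 ≤ g n ω}) atTop (nhds (1 - 0)) :=
    ENNReal.Tendsto.sub tendsto_const_nhds hcomp (Or.inl (by simp))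
  simpa using this
end

section
/- Define p̂^RMM by p̂11 = max{0, 1 − ((x00+x10)/n)^{1/k} − ((x00+x01)/n)^{1/k} + (x00/n)^{1/k}}, p̂10 = 1 − ((x00+x01)/n)^{1/k} − p̂11, p̂01 = 1 − ((x00+x10)/n)^{1/k} − p̂11, p̂00 = 1 − p̂10 − p̂01 − p̂11, for nonnegative integers x00, x10, x01, x11 summing to n ≥ 1 and integer k ≥ 1. Then all four components of p̂^RMM are nonnegative and sum to 1. -/
/-- the restricted method of moments estimator is a probability vector. -/
theorem stmt_19 (k n : ℕ) (hk : 1 ≤ k) (hn : 1 ≤ n)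
    (x00 x10 x01 x11 : ℕ) (hsum : x00 + x10 + x01 + x11 = n) :
    let a : ℝ := (((x00 : ℝ) + x10) / n) ^ ((1 : ℝ) / k)
    let b : ℝ := (((x00 : ℝ) + x01) / n) ^ ((1 : ℝ) / k)
    let c : ℝ := ((x00 : ℝ) / n) ^ ((1 : ℝ) / k)
    let p11 := max 0 (1 - a - b + c)
    let p10 := 1 - b - p11
    let p01 := 1 - a - p11
    let p00 := 1 - p10 - p01 - p11
    0 ≤ p00 ∧ 0 ≤ p10 ∧ 0 ≤ p01 ∧ 0 ≤ p11 ∧ p00 + p10 + p01 + p11 = 1 := by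
  intro a b c p11 p10 p01 p00
  have hnpos : (0 : ℝ) < n := by exact_mod_cast hn
  have hexp : (0:ℝ) ≤ 1 / k := by positivity
  have h0c : (0:ℝ) ≤ (x00 : ℝ) / n := by positivity
  have hca1 : (x00 : ℝ) / n ≤ ((x00 : ℝ) + x10) / n := by
    apply div_le_div_of_nonneg_right ?_ hnpos.le
    · linarith [Nat.cast_nonneg (α := ℝ) x10]
  have hcb1 : (x00 : ℝ) / n ≤ ((x00 : ℝ) + x01) / n := by
    apply div_le_div_of_nonneg_right ?_ hnpos.le
    · linarith [Nat.cast_nonneg (α := ℝ) x01]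
  have ha1 : ((x00 : ℝ) + x10) / n ≤ 1 := by
    rw [div_le_one hnpos]
    have : (x00 : ℝ) + x10 + x01 + x11 = n := by exact_mod_cast congrArg (Nat.cast : ℕ → ℝ) hsum
    linarith [Nat.cast_nonneg (α := ℝ) x01, Nat.cast_nonneg (α := ℝ) x11]
  have hb1 : ((x00 : ℝ) + x01) / n ≤ 1 := by
    rw [div_le_one hnpos]
    have : (x00 : ℝ) + x10 + x01 + x11 = n := by exact_mod_cast congrArg (Nat.cast : ℕ → ℝ) hsum
    linarith [Nat.cast_nonneg (α := ℝ) x10, Nat.cast_nonneg (α := ℝ) x11]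
  have hc0 : 0 ≤ c := Real.rpow_nonneg h0c _
  have hca : c ≤ a := Real.rpow_le_rpow h0c hca1 hexp
  have hcb : c ≤ b := Real.rpow_le_rpow h0c hcb1 hexp
  have haa : a ≤ 1 := Real.rpow_le_one (by positivity) ha1 hexp
  have hbb : b ≤ 1 := Real.rpow_le_one (by positivity) hb1 hexp
  have hp11 : 0 ≤ p11 := le_max_left _ _
  have hsum1 : p00 + p10 + p01 + p11 = 1 := by simp only [p00]; ring
  rcases le_or_gt (1 - a - b + c) 0 with h | h
  · have hp : p11 = 0 := max_eq_left h
    refine ⟨?_, ?_, ?_, hp11, hsum1⟩ <;> simp only [p00, p10, p01, hp] <;> linarith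
  · have hp : p11 = 1 - a - b + c := max_eq_right h.le
    refine ⟨?_, ?_, ?_, hp11, hsum1⟩ <;> simp only [p00, p10, p01, hp] <;> linarith
end
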